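/- Let A = {−1,1}. Then s_A(C_3^3) = 9; that is, every sequence over C_3^3 of length at least 9 has an A-zero-sum subsequence of length 3, and there exists a sequence over C_3^3 of length 8 with no A-zero-sum subsequence of length 3. -/

import Mathlib

/-- A multiset `S` over an additive abelian group `G` has an `A`-zero-sum subsequence
of length `k`, for the weight set `A = {-1, 1}`: there is a sub-multiset of `S` of
cardinality `k` that splits as `t₁ + t₂` with `t₁.sum - t₂.sum = 0` (the elements of
`t₁` receive the weight `+1` and those of `t₂` the weight `-1`). -/
def HasWZSS {G : Type*} [AddCommGroup G] (S : Multiset G) (k : ℕ) : Prop :=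
  ∃ t₁ t₂ : Multiset G, t₁ + t₂ ≤ S ∧ Multiset.card (t₁ + t₂) = k ∧ t₁.sum = t₂.sum

/-- `sA G` is the smallest `ℓ` such that every sequence over `G` of length at least `ℓ`
has an `{-1,1}`-zero-sum subsequence of length `exp G`. -/
noncomputable def sA (G : Type*) [AddCommGroup G] : ℕ :=
  sInf {ℓ : ℕ | ∀ S : Multiset G, ℓ ≤ Multiset.card S →
    HasWZSS S (AddMonoid.exponent G)}

/-- `etaA G` is the smallest `ℓ` such that every sequence over `G` of length at least `ℓ`
has a nonempty `{-1,1}`-zero-sum subsequence of length at most `exp G`. -/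
noncomputable def etaA (G : Type*) [AddCommGroup G] : ℕ :=
  sInf {ℓ : ℕ | ∀ S : Multiset G, ℓ ≤ Multiset.card S →
    ∃ k, 1 ≤ k ∧ k ≤ AddMonoid.exponent G ∧ HasWZSS S k}

/-- `gA G` is the smallest `ℓ` such that every sequence over `G` of length at least `ℓ`
consisting of pairwise distinct elements has an `{-1,1}`-zero-sum subsequence of
length `exp G`. -/
noncomputable def gA (G : Type*) [AddCommGroup G] : ℕ :=
  sInf {ℓ : ℕ | ∀ S : Multiset G, ℓ ≤ Multiset.card S → S.Nodup →
    HasWZSS S (AddMonoid.exponent G)}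

namespace SACap

abbrev G3 : Type := Fin 3 → ZMod 3

def D (a b c : G3) : Prop :=
  a+b+c=0 ∨ a+b-c=0 ∨ a-b+c=0 ∨ -a+b+c=0 ∨ a-b-c=0 ∨ -a+b-c=0 ∨ -a-b+c=0 ∨ -a-b-c=0

instance (a b c : G3) : Decidable (D a b c) := by unfold D; infer_instance

def reps : Fin 13 → G3 := ![![0,0,1], ![0,1,0], ![0,1,1], ![0,1,2], ![1,0,0], ![1,0,1], ![1,0,2], ![1,1,0], ![1,1,1], ![1,1,2], ![1,2,0], ![1,2,1], ![1,2,2]]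

def mask : ℕ := 352330643147768744930602592703512159289027797951184179310998374822470690545751833918397021830847577406253795733636895128823063655795733857750177086185363947612922196904205417892302196045815140014599305164266152378913211462703011928957804416894794476694105025950001426055872227427429287360878102440458743947682424953460538956162704032108128947320030060853217802469070960676034857224185772780718762301154264294880211022729597147132038801700091855450310780328650041347976522927848531549129553826189177686268265218456789195247259495473687330723457900336483578257088078526661826521670124741190047776557052449668425313791573227248732008552936789357031619934912512

def good (i j k : Fin 13) : Bool := mask.testBit (169*i.val+13*j.val+k.val)

theorem good_sound : ∀ i j k : Fin 13, good i j k = true →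
    i ≠ j ∧ i ≠ k ∧ j ≠ k ∧ D (reps i) (reps j) (reps k) := by decide

theorem covered : ∀ v : G3, v = 0 ∨ ∃ i : Fin 13, v = reps i ∨ v = -reps i := by decide

theorem reps_ne_neg : ∀ i : Fin 13, reps i ≠ -reps i := by decide
theorem reps_ne_zero : ∀ i : Fin 13, reps i ≠ 0 := by decide

set_option maxRecDepth 40000 in
set_option maxHeartbeats 2000000 in
theorem cap5 : ∀ a : Fin 13, ∀ b : Fin 13, a < b → ∀ c : Fin 13, b < c → ∀ d : Fin 13, c < d →
    ∀ e : Fin 13, d < e →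
    (good a b c || good a b d || good a b e || good a c d || good a c e || good a d e ||
     good b c d || good b c e || good b d e || good c d e) = true := by decide

theorem three_eq_zero : ∀ v : G3, v + v + v = 0 := by decide

theorem D_neg_left {a b c : G3} : D (-a) b c ↔ D a b c := by
  unfold D; constructor <;> intro h <;> simp only [sub_eq_add_neg, neg_neg] at h ⊢ <;> tauto

theorem D_neg_mid {a b c : G3} : D a (-b) c ↔ D a b c := by
  unfold D; constructor <;> intro h <;> simp only [sub_eq_add_neg, neg_neg] at h ⊢ <;> tauto

theorem D_neg_right {a b c : G3} : D a b (-c) ↔ D a b c := by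
  unfold D; constructor <;> intro h <;> simp only [sub_eq_add_neg, neg_neg] at h ⊢ <;> tauto


-- multiset permutation helpers
section perms
variable {γ : Type*} (a b c : γ)

theorem p_acb : ({a,b,c} : Multiset γ) = {a,c} + {b} := by
  simp only [Multiset.insert_eq_cons, ← Multiset.singleton_add]; try abel

theorem p_bca : ({a,b,c} : Multiset γ) = {b,c} + {a} := by
  simp only [Multiset.insert_eq_cons, ← Multiset.singleton_add]; try abel

theorem p_b_ac : ({a,b,c} : Multiset γ) = {b} + {a,c} := by
  simp only [Multiset.insert_eq_cons, ← Multiset.singleton_add]; try abel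

theorem p_c_ab : ({a,b,c} : Multiset γ) = {c} + {a,b} := by
  simp only [Multiset.insert_eq_cons, ← Multiset.singleton_add]; try abel

theorem p_ab_c : ({a,b,c} : Multiset γ) = {a,b} + {c} := by
  simp only [Multiset.insert_eq_cons, ← Multiset.singleton_add]; try abel

theorem p_a_bc : ({a,b,c} : Multiset γ) = {a} + {b,c} := by
  simp only [Multiset.insert_eq_cons, ← Multiset.singleton_add]; try abel

theorem p_all_z : ({a,b,c} : Multiset γ) = {a,b,c} + 0 := by simp

theorem p_z_all : ({a,b,c} : Multiset γ) = 0 + {a,b,c} := by simp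

end perms

theorem wzss_of_D {S : Multiset G3} {a b c : G3} (hle : ({a,b,c} : Multiset G3) ≤ S)
    (h : D a b c) : HasWZSS S 3 := by
  rcases h with h|h|h|h|h|h|h|h
  · exact ⟨{a,b,c}, 0, (p_all_z a b c) ▸ hle, by simp, by
      simp only [Multiset.insert_eq_cons, Multiset.sum_cons, Multiset.sum_singleton,
        Multiset.sum_zero]; linear_combination h⟩
  · exact ⟨{a,b}, {c}, (p_ab_c a b c) ▸ hle, by simp, by
      simp only [Multiset.insert_eq_cons, Multiset.sum_cons, Multiset.sum_singleton]
      linear_combination h⟩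
  · exact ⟨{a,c}, {b}, (p_acb a b c) ▸ hle, by simp, by
      simp only [Multiset.insert_eq_cons, Multiset.sum_cons, Multiset.sum_singleton]
      linear_combination h⟩
  · exact ⟨{b,c}, {a}, (p_bca a b c) ▸ hle, by simp, by
      simp only [Multiset.insert_eq_cons, Multiset.sum_cons, Multiset.sum_singleton]
      linear_combination h⟩
  · exact ⟨{a}, {b,c}, (p_a_bc a b c) ▸ hle, by simp, by
      simp only [Multiset.insert_eq_cons, Multiset.sum_cons, Multiset.sum_singleton]
      linear_combination h⟩
  · exact ⟨{b}, {a,c}, (p_b_ac a b c) ▸ hle, by simp, by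
      simp only [Multiset.insert_eq_cons, Multiset.sum_cons, Multiset.sum_singleton]
      linear_combination h⟩
  · exact ⟨{c}, {a,b}, (p_c_ab a b c) ▸ hle, by simp, by
      simp only [Multiset.insert_eq_cons, Multiset.sum_cons, Multiset.sum_singleton]
      linear_combination h⟩
  · exact ⟨0, {a,b,c}, (p_z_all a b c) ▸ hle, by simp, by
      simp only [Multiset.insert_eq_cons, Multiset.sum_cons, Multiset.sum_singleton,
        Multiset.sum_zero]; linear_combination h⟩


theorem le_S_1 {x : G3} {S : Multiset G3} (h : 3 ≤ S.count x) : ({x,x,x} : Multiset G3) ≤ S := by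
  have : ({x,x,x} : Multiset G3) = Multiset.replicate 3 x := rfl
  rw [this]
  exact Multiset.le_count_iff_replicate_le.mp h

theorem le_S_2 {x y : G3} {S : Multiset G3} (hxy : x ≠ y) (h2 : 2 ≤ S.count x) (hy : y ∈ S) :
    ({x,x,y} : Multiset G3) ≤ S := by
  rw [Multiset.le_iff_count]
  intro w
  have hy1 : 1 ≤ S.count y := Multiset.one_le_count_iff_mem.mpr hy
  simp only [Multiset.insert_eq_cons, Multiset.count_cons, Multiset.count_singleton]
  split_ifs <;> subst_eqs <;> simp_all <;> omega

theorem le_S_3 {x y z : G3} {S : Multiset G3} (hxy : x ≠ y) (hxz : x ≠ z) (hyz : y ≠ z)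
    (hx : x ∈ S) (hy : y ∈ S) (hz : z ∈ S) : ({x,y,z} : Multiset G3) ≤ S := by
  rw [Multiset.le_iff_count]
  intro w
  have h1 : 1 ≤ S.count x := Multiset.one_le_count_iff_mem.mpr hx
  have h2 : 1 ≤ S.count y := Multiset.one_le_count_iff_mem.mpr hy
  have h3 : 1 ≤ S.count z := Multiset.one_le_count_iff_mem.mpr hz
  simp only [Multiset.insert_eq_cons, Multiset.count_cons, Multiset.count_singleton]
  split_ifs with e1 e2 e3 <;> subst_eqs <;> simp_all <;> omega

theorem self_ne_neg {x : G3} (hx : x ≠ 0) : x ≠ -x := by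
  intro he
  apply hx
  have h2 : x + x = 0 := by nth_rewrite 1 [he]; exact neg_add_cancel x
  have h3 := three_eq_zero x
  linear_combination h3 - h2

noncomputable def cls (v : G3) : Fin 13 :=
  if h : ∃ i : Fin 13, v = reps i ∨ v = -reps i then h.choose else 0

theorem cls_spec {v : G3} (hv : v ≠ 0) : v = reps (cls v) ∨ v = -reps (cls v) := by
  rcases covered v with h0 | h
  · exact absurd h0 hv
  · have he : cls v = h.choose := by unfold cls; rw [dif_pos h]
    rw [he]
    exact h.choose_spec

theorem list5 {α : Type*} (l : List α) (h : l.length = 5) : ∃ a b c d e, l = [a,b,c,d,e] := by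
  rcases l with _|⟨a,_|⟨b,_|⟨c,_|⟨d,_|⟨e,_|⟨f,l⟩⟩⟩⟩⟩⟩ <;>
    first
      | exact ⟨a,b,c,d,e,rfl⟩
      | (exfalso; simp only [List.length_cons, List.length_nil] at h; omega)

theorem cap (s : Finset (Fin 13)) (h5 : 5 ≤ s.card) :
    ∃ i ∈ s, ∃ j ∈ s, ∃ k ∈ s, good i j k = true := by
  obtain ⟨t, hts, ht⟩ := Finset.exists_subset_card_eq h5
  have hlen : (t.sort (· ≤ ·)).length = 5 := by rw [Finset.length_sort]; exact ht
  have hsorted : (t.sort (· ≤ ·)).Pairwise (· < ·) := (Finset.sortedLT_sort t).pairwise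
  have hmem : ∀ x ∈ t.sort (· ≤ ·), x ∈ s := fun x hx => hts ((Finset.mem_sort _).1 hx)
  obtain ⟨a, b, c, d, e, hl5⟩ := list5 _ hlen
  rw [hl5] at hsorted hmem
  simp only [List.pairwise_cons, List.mem_cons, List.not_mem_nil, or_false,
    List.mem_singleton] at hsorted
  have ha : a ∈ s := hmem a (by simp)
  have hb : b ∈ s := hmem b (by simp)
  have hc : c ∈ s := hmem c (by simp)
  have hd : d ∈ s := hmem d (by simp)
  have he : e ∈ s := hmem e (by simp)
  have hab : a < b := hsorted.1 b (by tauto)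
  have hbc : b < c := hsorted.2.1 c (by tauto)
  have hcd : c < d := hsorted.2.2.1 d (by tauto)
  have hde : d < e := hsorted.2.2.2.1 e (by tauto)
  have hdisj := cap5 a b hab c hbc d hcd e hde
  simp only [Bool.or_eq_true] at hdisj
  rcases hdisj with ((((((((h|h)|h)|h)|h)|h)|h)|h)|h)|h
  exacts [⟨a,ha,b,hb,c,hc,h⟩, ⟨a,ha,b,hb,d,hd,h⟩, ⟨a,ha,b,hb,e,he,h⟩, ⟨a,ha,c,hc,d,hd,h⟩,
    ⟨a,ha,c,hc,e,he,h⟩, ⟨a,ha,d,hd,e,he,h⟩, ⟨b,hb,c,hc,d,hd,h⟩, ⟨b,hb,c,hc,e,he,h⟩,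
    ⟨b,hb,d,hd,e,he,h⟩, ⟨c,hc,d,hd,e,he,h⟩]


theorem main9 (S : Multiset (Fin 3 → ZMod 3)) (h9 : 9 ≤ Multiset.card S) : HasWZSS S 3 := by
  classical
  by_contra hno
  have H : ∀ a b c : G3, ({a,b,c} : Multiset G3) ≤ S → ¬ D a b c :=
    fun a b c hle hD => hno (wzss_of_D hle hD)
  -- count bounds
  have hc1 : ∀ x : G3, S.count x ≤ 2 := by
    intro x; by_contra h; push_neg at h
    exact H x x x (le_S_1 h) (Or.inl (three_eq_zero x))
  have hc2 : ∀ x : G3, x ≠ 0 → 2 ≤ S.count x → -x ∉ S := by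
    intro x hx h2 hmem
    exact H x x (-x) (le_S_2 (self_ne_neg hx) h2 hmem)
      (Or.inr (Or.inl (by linear_combination three_eq_zero x)))
  have hc3 : (0:G3) ∈ S → ∀ x : G3, x ≠ 0 → S.count x ≤ 1 := by
    intro h0 x hx
    by_contra h; push_neg at h
    exact H x x 0 (le_S_2 hx h h0) (Or.inr (Or.inr (Or.inl (by linear_combination (0:G3)))))
  have hc4 : (0:G3) ∈ S → ∀ x : G3, x ≠ 0 → x ∈ S → -x ∉ S := by
    intro h0 x hx hxS hnxS
    exact H x (-x) 0
      (le_S_3 (self_ne_neg hx) hx (neg_ne_zero.mpr hx) hxS hnxS h0)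
      (Or.inl (by linear_combination (0:G3)))
  have hc5 : S.count 0 ≤ 2 := by
    by_contra h; push_neg at h
    exact H 0 0 0 (le_S_1 h) (Or.inl (by simp))
  -- set up class decomposition
  set T' : Finset G3 := S.toFinset.erase 0 with hT'
  have hmemT' : ∀ x ∈ T', x ∈ S ∧ x ≠ 0 := by
    intro x hx
    rw [hT', Finset.mem_erase, Multiset.mem_toFinset] at hx
    exact ⟨hx.2, hx.1⟩
  set C : Finset (Fin 13) := T'.image cls with hC
  have key : Multiset.card S = S.count 0 + ∑ x ∈ T', S.count x := by
    rw [← Multiset.toFinset_sum_count_eq]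
    by_cases h0 : (0:G3) ∈ S.toFinset
    · rw [← Finset.add_sum_erase _ _ h0]
    · rw [hT', Finset.erase_eq_of_notMem h0,
        Multiset.count_eq_zero.2 (by simpa [Multiset.mem_toFinset] using h0), zero_add]
  have fib : ∑ x ∈ T', S.count x
      = ∑ c ∈ C, ∑ x ∈ T'.filter (fun x => cls x = c), S.count x :=
    (Finset.sum_fiberwise_of_maps_to (fun x hx => Finset.mem_image_of_mem _ hx) _).symm
  have fibsub : ∀ c : Fin 13, T'.filter (fun x => cls x = c) ⊆ {reps c, -reps c} := by
    intro c x hx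
    rw [Finset.mem_filter] at hx
    obtain ⟨hx1, hx2⟩ := hx
    have hxne := (hmemT' x hx1).2
    rcases cls_spec hxne with h | h <;> rw [Finset.mem_insert, Finset.mem_singleton, ← hx2] <;>
      tauto
  have fibbound : ∀ c : Fin 13,
      (∑ x ∈ T'.filter (fun x => cls x = c), S.count x) ≤ S.count (reps c) + S.count (-reps c) := by
    intro c
    calc (∑ x ∈ T'.filter (fun x => cls x = c), S.count x)
        ≤ ∑ x ∈ ({reps c, -reps c} : Finset G3), S.count x :=
          Finset.sum_le_sum_of_subset (fibsub c)
      _ = S.count (reps c) + S.count (-reps c) := Finset.sum_pair (reps_ne_neg c)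
  have hCge5 : 5 ≤ C.card := by
    by_cases h0S : (0:G3) ∈ S
    · -- each fiber contributes at most 1
      have fb1 : ∀ c ∈ C, (∑ x ∈ T'.filter (fun x => cls x = c), S.count x) ≤ 1 := by
        intro c _
        have b1 : S.count (reps c) ≤ 1 := hc3 h0S _ (reps_ne_zero c)
        have b2 : S.count (-reps c) ≤ 1 := hc3 h0S _ (neg_ne_zero.mpr (reps_ne_zero c))
        have b3 : ¬(1 ≤ S.count (reps c) ∧ 1 ≤ S.count (-reps c)) := by
          rintro ⟨u1, u2⟩
          exact hc4 h0S _ (reps_ne_zero c) (Multiset.one_le_count_iff_mem.mp u1)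
            (Multiset.one_le_count_iff_mem.mp u2)
        have := fibbound c
        omega
      have : ∑ x ∈ T', S.count x ≤ C.card * 1 := by
        rw [fib]; exact Finset.sum_le_card_nsmul _ _ 1 fb1
      omega
    · -- each fiber contributes at most 2
      have h00 : S.count 0 = 0 := Multiset.count_eq_zero.2 h0S
      have fb2 : ∀ c ∈ C, (∑ x ∈ T'.filter (fun x => cls x = c), S.count x) ≤ 2 := by
        intro c _
        have b1 : S.count (reps c) ≤ 2 := hc1 _
        have b2 : S.count (-reps c) ≤ 2 := hc1 _
        have b3 : 2 ≤ S.count (reps c) → S.count (-reps c) = 0 := fun h2 =>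
          Multiset.count_eq_zero.2 (hc2 _ (reps_ne_zero c) h2)
        have b4 : 2 ≤ S.count (-reps c) → S.count (reps c) = 0 := by
          intro h2
          have := hc2 _ (neg_ne_zero.mpr (reps_ne_zero c)) h2
          rw [neg_neg] at this
          exact Multiset.count_eq_zero.2 this
        have := fibbound c
        omega
      have : ∑ x ∈ T', S.count x ≤ C.card * 2 := by
        rw [fib]; exact Finset.sum_le_card_nsmul _ _ 2 fb2
      omega
  -- apply the cap bound
  obtain ⟨i, hi, j, hj, k, hk, hg⟩ := cap C hCge5
  obtain ⟨hij, hik, hjk, hD⟩ := good_sound i j k hg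
  rw [hC, Finset.mem_image] at hi hj hk
  obtain ⟨x, hxT, hxc⟩ := hi
  obtain ⟨y, hyT, hyc⟩ := hj
  obtain ⟨z, hzT, hzc⟩ := hk
  have hxy : x ≠ y := fun h => hij (by rw [← hxc, ← hyc, h])
  have hxz : x ≠ z := fun h => hik (by rw [← hxc, ← hzc, h])
  have hyz : y ≠ z := fun h => hjk (by rw [← hyc, ← hzc, h])
  have hDxyz : D x y z := by
    rcases cls_spec (hmemT' x hxT).2 with hx' | hx' <;>
      rcases cls_spec (hmemT' y hyT).2 with hy' | hy' <;>
        rcases cls_spec (hmemT' z hzT).2 with hz' | hz' <;>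
          rw [hx', hy', hz', hxc, hyc, hzc] <;>
            (try simp only [D_neg_left, D_neg_mid, D_neg_right]) <;> exact hD
  exact H x y z
    (le_S_3 hxy hxz hyz (hmemT' x hxT).1 (hmemT' y hyT).1 (hmemT' z hzT).1) hDxyz


def S8 : Multiset G3 :=
  {![1,0,0], ![1,0,0], ![0,1,0], ![0,1,0], ![0,0,1], ![0,0,1], ![1,1,1], ![1,1,1]}

theorem card_S8 : Multiset.card S8 = 8 := rfl

theorem noW_S8 : ¬ HasWZSS S8 3 := by
  rintro ⟨t1, t2, hle, hcard, hsum⟩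
  have hall : ∀ t ∈ Multiset.powersetCard 3 S8, ∀ u ∈ Multiset.powerset t,
      u.sum + u.sum ≠ t.sum := by decide
  exact hall (t1 + t2) (Multiset.mem_powersetCard.2 ⟨hle, hcard⟩) t1
    (Multiset.mem_powerset.2 (Multiset.le_add_right _ _)) (by rw [Multiset.sum_add, hsum])

theorem exp3 : AddMonoid.exponent G3 = 3 := by
  have hp : Fact (Nat.Prime 3) := ⟨by norm_num⟩
  have hsm : ∀ g : G3, (3:ℕ) • g = 0 := by
    intro g
    show (2 + 1 : ℕ) • g = 0
    rw [add_nsmul, two_nsmul, one_nsmul]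
    exact three_eq_zero g
  have h1 : AddMonoid.exponent G3 ∣ 3 := by
    rw [AddMonoid.exponent_dvd_iff_forall_nsmul_eq_zero]
    exact hsm
  have hg0 : ((fun _ => (1 : ZMod 3)) : G3) ≠ 0 := by
    intro h
    have h0 := congrFun h 0
    rw [Pi.zero_apply] at h0
    exact one_ne_zero h0
  have ho : addOrderOf ((fun _ => (1 : ZMod 3)) : G3) = 3 := addOrderOf_eq_prime (hsm _) hg0
  have h2 := AddMonoid.addOrder_dvd_exponent ((fun _ => (1 : ZMod 3)) : G3)
  rw [ho] at h2
  exact Nat.dvd_antisymm h1 h2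

end SACap

/-- `s_A(C_3^3) = 9`; that is, every sequence over `C_3^3` of length
at least `9` has a `{-1,1}`-zero-sum subsequence of length `3`, and there is a sequence
of length `8` with no such subsequence. -/
theorem sA_three_cubed :
    sA (Fin 3 → ZMod 3) = 9 ∧
    (∀ S : Multiset (Fin 3 → ZMod 3), 9 ≤ Multiset.card S → HasWZSS S 3) ∧
    ∃ S : Multiset (Fin 3 → ZMod 3), Multiset.card S = 8 ∧ ¬ HasWZSS S 3 := by
  refine ⟨?_, SACap.main9, SACap.S8, SACap.card_S8, SACap.noW_S8⟩
  unfold sA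
  simp only [SACap.exp3]
  apply le_antisymm
  · exact Nat.sInf_le (fun S h => SACap.main9 S h)
  · refine le_csInf ⟨9, fun S h => SACap.main9 S h⟩ ?_
    intro b hb
    by_contra hb9
    push_neg at hb9
    exact SACap.noW_S8 (hb SACap.S8 (by rw [SACap.card_S8]; omega))
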